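/- Theorem 1 (measure form): let Σ_anc := Σ₁ + Σ₁ Σ₂⁻¹ Σ₁ and Σ_post := (Σ₁⁻¹ + Σ₂⁻¹)⁻¹, both of which are positive definite. Then the pushforward of the multivariate Gaussian measure N(μ₁, Σ_anc) on ℝ^d (equivalently, on EuclideanSpace ℝ (Fin d)) under the affine map y ↦ Σ_post Σ₁⁻¹ y + Σ_post Σ₂⁻¹ μ₂ equals the multivariate Gaussian measure N(μ_post, Σ_post), where μ_post := Σ_post Σ₂⁻¹ μ₂ + Σ_post Σ₁⁻¹ μ₁. In words: if anchor points are sampled with mean μ_anc = μ₁ and covariance Σ_anc = Σ₁ + Σ₁ Σ₂⁻¹ Σ₁, then the distribution of the (affine) MAP solutions equals the Bayesian posterior N(μ_post, Σ_post). -/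

import Mathlib

open Matrix MeasureTheory

/-- Multivariate Gaussian density with mean `μ` and covariance `S`. -/
noncomputable def gaussianPdf {d : ℕ} (μ : Fin d → ℝ) (S : Matrix (Fin d) (Fin d) ℝ)
    (x : Fin d → ℝ) : ℝ :=
  ((2 * Real.pi) ^ d * S.det) ^ (-(1/2 : ℝ)) *
    Real.exp (-(1/2 : ℝ) * ((x - μ) ⬝ᵥ (S⁻¹ *ᵥ (x - μ))))

/-- Multivariate Gaussian measure `N(μ, S)` on `EuclideanSpace ℝ (Fin d)`. -/
noncomputable def gaussianMeasure {d : ℕ} (μ : Fin d → ℝ) (S : Matrix (Fin d) (Fin d) ℝ) :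
    Measure (EuclideanSpace ℝ (Fin d)) :=
  volume.withDensity fun x => ENNReal.ofReal (gaussianPdf μ S x)

section Auxiliary

variable {d : ℕ}

lemma det_toEuclideanLin (A : Matrix (Fin d) (Fin d) ℝ) :
    LinearMap.det (Matrix.toEuclideanLin A) = A.det := by
  rw [Matrix.toEuclideanLin_eq_toLin, ← LinearMap.det_toMatrix (PiLp.basisFun 2 ℝ (Fin d)),
    LinearMap.toMatrix_toLin]

lemma map_affine_volume (A : Matrix (Fin d) (Fin d) ℝ) (hA : A.det ≠ 0) (b : Fin d → ℝ) :
    Measure.map (fun y : EuclideanSpace ℝ (Fin d) =>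
      (WithLp.toLp 2 (A *ᵥ y + b) : EuclideanSpace ℝ (Fin d))) volume
      = ENNReal.ofReal |A.det|⁻¹ • (volume : Measure (EuclideanSpace ℝ (Fin d))) := by
  have hdet : LinearMap.det (Matrix.toEuclideanLin A) ≠ 0 := by
    rwa [det_toEuclideanLin]
  set b' : EuclideanSpace ℝ (Fin d) := WithLp.toLp 2 b with hb'
  have hcomp : (fun y : EuclideanSpace ℝ (Fin d) => (WithLp.toLp 2 (A *ᵥ y + b) : EuclideanSpace ℝ (Fin d)))
      = (fun x : EuclideanSpace ℝ (Fin d) => x + b') ∘ (Matrix.toEuclideanLin A) := rfl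
  rw [hcomp, ← Measure.map_map (measurable_add_const b')
      (Matrix.toEuclideanLin A).continuous_of_finiteDimensional.measurable,
    Measure.map_linearMap_addHaar_eq_smul_addHaar volume hdet, Measure.map_smul,
    map_add_right_eq_self volume, det_toEuclideanLin, abs_inv]

lemma map_withDensity_equiv {α β : Type*} [MeasurableSpace α] [MeasurableSpace β]
    (e : α ≃ᵐ β) (μ : Measure α) (f : β → ENNReal) (hf : Measurable f) :
    Measure.map e (μ.withDensity (fun x => f (e x))) = (Measure.map e μ).withDensity f := by
  ext s hs
  rw [Measure.map_apply e.measurable hs, withDensity_apply _ (e.measurable hs),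
    withDensity_apply _ hs, setLIntegral_map hs hf e.measurable]

noncomputable def affEquiv (A : Matrix (Fin d) (Fin d) ℝ) (hA : IsUnit A.det) (b : Fin d → ℝ) :
    EuclideanSpace ℝ (Fin d) ≃ᵐ EuclideanSpace ℝ (Fin d) where
  toFun y := (WithLp.toLp 2 (A *ᵥ y + b) : EuclideanSpace ℝ (Fin d))
  invFun x := (WithLp.toLp 2 (A⁻¹ *ᵥ x - A⁻¹ *ᵥ b) : EuclideanSpace ℝ (Fin d))
  left_inv y := by
    simp [Matrix.mulVec_add, Matrix.mulVec_mulVec, Matrix.nonsing_inv_mul A hA,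
      Matrix.one_mulVec]
  right_inv x := by
    simp [Matrix.mulVec_sub, Matrix.mulVec_mulVec, Matrix.mul_nonsing_inv A hA,
      Matrix.one_mulVec]
  measurable_toFun := by
    have : Continuous (fun y : EuclideanSpace ℝ (Fin d) =>
        (WithLp.toLp 2 (A *ᵥ y + b) : EuclideanSpace ℝ (Fin d))) :=
      ((Matrix.toEuclideanLin A).continuous_of_finiteDimensional).add continuous_const
    exact this.measurable
  measurable_invFun := by
    have : Continuous (fun x : EuclideanSpace ℝ (Fin d) =>
        (WithLp.toLp 2 (A⁻¹ *ᵥ x - A⁻¹ *ᵥ b) : EuclideanSpace ℝ (Fin d))) := by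
      have h1 : Continuous (fun x : EuclideanSpace ℝ (Fin d) =>
          Matrix.toEuclideanLin A⁻¹ x - Matrix.toEuclideanLin A⁻¹ (WithLp.toLp 2 b)) :=
        ((Matrix.toEuclideanLin A⁻¹).continuous_of_finiteDimensional).sub continuous_const
      exact h1
    exact this.measurable

lemma map_affine_withDensity (A : Matrix (Fin d) (Fin d) ℝ) (hA : IsUnit A.det) (b : Fin d → ℝ)
    (f : EuclideanSpace ℝ (Fin d) → ENNReal) (hf : Measurable f) :
    Measure.map (fun y : EuclideanSpace ℝ (Fin d) =>
        (WithLp.toLp 2 (A *ᵥ y + b) : EuclideanSpace ℝ (Fin d))) (volume.withDensity f)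
      = volume.withDensity
          (fun x : EuclideanSpace ℝ (Fin d) =>
            ENNReal.ofReal |A.det|⁻¹ * f (WithLp.toLp 2 (A⁻¹ *ᵥ x - A⁻¹ *ᵥ b))) := by
  set e := affEquiv A hA b with he
  set g : EuclideanSpace ℝ (Fin d) → ENNReal :=
    fun x => f (WithLp.toLp 2 (A⁻¹ *ᵥ x - A⁻¹ *ᵥ b)) with hg
  have hgm : Measurable g := hf.comp (e.measurable_invFun)
  have hfeq : f = fun x => g (e x) := by
    funext x
    show f x = f (e.symm (e x))
    rw [e.symm_apply_apply]
  have h1 : Measure.map (fun y : EuclideanSpace ℝ (Fin d) =>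
      (WithLp.toLp 2 (A *ᵥ y + b) : EuclideanSpace ℝ (Fin d))) (volume.withDensity f)
      = Measure.map e (volume.withDensity (fun x => g (e x))) := by rw [← hfeq]; rfl
  rw [h1, map_withDensity_equiv e volume g hgm]
  have h2 : Measure.map (⇑e) (volume : Measure (EuclideanSpace ℝ (Fin d)))
      = ENNReal.ofReal |A.det|⁻¹ • (volume : Measure (EuclideanSpace ℝ (Fin d))) :=
    map_affine_volume A (hA.ne_zero) b
  rw [h2, withDensity_smul_measure, ← withDensity_smul _ hgm]
  rfl

lemma continuous_gaussianPdf (μ : Fin d → ℝ) (S : Matrix (Fin d) (Fin d) ℝ) :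
    Continuous (gaussianPdf μ S) := by
  unfold gaussianPdf
  refine continuous_const.mul (Real.continuous_exp.comp (continuous_const.mul ?_))
  simp only [dotProduct, mulVec, Pi.sub_apply]
  exact continuous_finset_sum _ fun i _ =>
    ((continuous_apply i).sub continuous_const).mul
      (continuous_finset_sum _ fun j _ =>
        continuous_const.mul ((continuous_apply j).sub continuous_const))

lemma measurable_gaussianPdf_ofReal (μ : Fin d → ℝ) (S : Matrix (Fin d) (Fin d) ℝ) :
    Measurable (fun x : EuclideanSpace ℝ (Fin d) => ENNReal.ofReal (gaussianPdf μ S x)) := by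
  have h : Continuous (fun x : EuclideanSpace ℝ (Fin d) => gaussianPdf μ S x) :=
    (continuous_gaussianPdf μ S).comp (PiLp.continuous_ofLp (p := 2) (β := fun _ : Fin d => ℝ))
  exact h.measurable.ennreal_ofReal

lemma gaussianPdf_affine (A Sanc Spost : Matrix (Fin d) (Fin d) ℝ)
    (μ₁ μpost b : Fin d → ℝ)
    (uA : IsUnit A.det) (hK : A * Sanc * Aᵀ = Spost)
    (hSancdet : 0 < Sanc.det)
    (hmean : A *ᵥ μ₁ + b = μpost) (x : Fin d → ℝ) :
    |A.det|⁻¹ * gaussianPdf μ₁ Sanc (A⁻¹ *ᵥ x - A⁻¹ *ᵥ b)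
      = gaussianPdf μpost Spost x := by
  have uAT : IsUnit Aᵀ.det := by rwa [Matrix.det_transpose]
  have hdet : Spost.det = A.det * Sanc.det * A.det := by
    rw [← hK, Matrix.det_mul, Matrix.det_mul, Matrix.det_transpose]
  have hSancInv : Sanc⁻¹ = Aᵀ * Spost⁻¹ * A := by
    have h1 : Spost⁻¹ = Aᵀ⁻¹ * (Sanc⁻¹ * A⁻¹) := by
      rw [← hK, Matrix.mul_inv_rev, Matrix.mul_inv_rev]
    rw [h1, ← Matrix.mul_assoc, ← Matrix.mul_assoc, Matrix.mul_nonsing_inv _ uAT,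
      Matrix.one_mul, Matrix.mul_assoc, Matrix.nonsing_inv_mul _ uA, Matrix.mul_one]
  have hshift : A⁻¹ *ᵥ x - A⁻¹ *ᵥ b - μ₁ = A⁻¹ *ᵥ (x - μpost) := by
    rw [Matrix.mulVec_sub, ← hmean]
    have : A⁻¹ *ᵥ (A *ᵥ μ₁ + b) = μ₁ + A⁻¹ *ᵥ b := by
      rw [Matrix.mulVec_add, Matrix.mulVec_mulVec, Matrix.nonsing_inv_mul _ uA,
        Matrix.one_mulVec]
    rw [this]
    abel
  have hquad : (A⁻¹ *ᵥ x - A⁻¹ *ᵥ b - μ₁) ⬝ᵥ (Sanc⁻¹ *ᵥ (A⁻¹ *ᵥ x - A⁻¹ *ᵥ b - μ₁))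
      = (x - μpost) ⬝ᵥ (Spost⁻¹ *ᵥ (x - μpost)) := by
    rw [hshift, hSancInv]
    set v := x - μpost with hv
    rw [Matrix.mulVec_mulVec, Matrix.mul_assoc (Aᵀ * Spost⁻¹), Matrix.mul_nonsing_inv _ uA,
      Matrix.mul_one, Matrix.dotProduct_mulVec, ← Matrix.vecMul_vecMul,
      Matrix.vecMul_transpose, Matrix.mulVec_mulVec, Matrix.mul_nonsing_inv _ uA,
      Matrix.one_mulVec, ← Matrix.dotProduct_mulVec]
  have hconst : |A.det|⁻¹ * ((2 * Real.pi) ^ d * Sanc.det) ^ (-(1/2 : ℝ))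
      = ((2 * Real.pi) ^ d * Spost.det) ^ (-(1/2 : ℝ)) := by
    have key : (2 * Real.pi) ^ d * Spost.det
        = ((2 * Real.pi) ^ d * Sanc.det) * A.det ^ 2 := by rw [hdet]; ring
    have h2 : (A.det ^ 2 : ℝ) ^ (-(1/2:ℝ)) = |A.det|⁻¹ := by
      rw [← sq_abs, ← Real.rpow_natCast |A.det| 2, ← Real.rpow_mul (abs_nonneg _)]
      norm_num [Real.rpow_neg_one]
    rw [key, Real.mul_rpow (by positivity) (sq_nonneg _), h2]
    ring
  unfold gaussianPdf
  rw [hquad, ← mul_assoc, hconst]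

end Auxiliary

/-- Theorem 1 (measure form): with `Σ_anc := Σ₁ + Σ₁ Σ₂⁻¹ Σ₁` and
`Σ_post := (Σ₁⁻¹ + Σ₂⁻¹)⁻¹` (both positive definite), the pushforward of
`N(μ₁, Σ_anc)` under the affine MAP map `y ↦ Σ_post Σ₁⁻¹ y + Σ_post Σ₂⁻¹ μ₂`
equals the Bayesian posterior `N(μ_post, Σ_post)`, where
`μ_post := Σ_post Σ₂⁻¹ μ₂ + Σ_post Σ₁⁻¹ μ₁`. -/
theorem stmt_6 (d : ℕ) (hd : 1 ≤ d) (S1 S2 : Matrix (Fin d) (Fin d) ℝ)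
    (μ₁ μ₂ : Fin d → ℝ)
    (hS1sym : S1.IsSymm) (hS1 : S1.PosDef)
    (hS2sym : S2.IsSymm) (hS2 : S2.PosDef)
    (Sanc : Matrix (Fin d) (Fin d) ℝ) (hSanc : Sanc = S1 + S1 * S2⁻¹ * S1)
    (Spost : Matrix (Fin d) (Fin d) ℝ) (hSpost : Spost = (S1⁻¹ + S2⁻¹)⁻¹)
    (μpost : Fin d → ℝ) (hμpost : μpost = (Spost * S2⁻¹) *ᵥ μ₂ + (Spost * S1⁻¹) *ᵥ μ₁) :
    Sanc.PosDef ∧ Spost.PosDef ∧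
      Measure.map
          (fun y : EuclideanSpace ℝ (Fin d) =>
            (WithLp.toLp 2 ((Spost * S1⁻¹) *ᵥ y + (Spost * S2⁻¹) *ᵥ μ₂) : EuclideanSpace ℝ (Fin d)))
          (gaussianMeasure μ₁ Sanc)
        = gaussianMeasure μpost Spost := by
  have hS1i : S1⁻¹.PosDef := hS1.inv
  have hS2i : S2⁻¹.PosDef := hS2.inv
  have hsum : (S1⁻¹ + S2⁻¹).PosDef := hS1i.add hS2i
  have hSpostPD : Spost.PosDef := by rw [hSpost]; exact hsum.inv
  have hSancPD : Sanc.PosDef := by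
    rw [hSanc]
    have h := hS2i.posSemidef.mul_mul_conjTranspose_same S1
    rw [hS1.isHermitian.eq] at h
    exact hS1.add_posSemidef h
  refine ⟨hSancPD, hSpostPD, ?_⟩
  have uS1 : IsUnit S1.det := isUnit_iff_ne_zero.mpr hS1.det_pos.ne'
  have usum : IsUnit (S1⁻¹ + S2⁻¹).det := isUnit_iff_ne_zero.mpr hsum.det_pos.ne'
  have uSpost : IsUnit Spost.det := isUnit_iff_ne_zero.mpr hSpostPD.det_pos.ne'
  have uS1i : IsUnit S1⁻¹.det := isUnit_iff_ne_zero.mpr hS1i.det_pos.ne'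
  set A := Spost * S1⁻¹ with hA
  set b := (Spost * S2⁻¹) *ᵥ μ₂ with hb
  have uA : IsUnit A.det := by rw [hA, Matrix.det_mul]; exact uSpost.mul uS1i
  have hS1it : S1⁻¹ᵀ = S1⁻¹ := by rw [Matrix.transpose_nonsing_inv, hS1sym.eq]
  have hSpostT : Spostᵀ = Spost := by
    rw [← Matrix.conjTranspose_eq_transpose_of_trivial]
    exact hSpostPD.isHermitian.eq
  have hAT : Aᵀ = S1⁻¹ * Spost := by rw [hA, Matrix.transpose_mul, hS1it, hSpostT]
  have hSpostInv : Spost⁻¹ = S1⁻¹ + S2⁻¹ := by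
    rw [hSpost, Matrix.nonsing_inv_nonsing_inv _ usum]
  have hK : A * Sanc * Aᵀ = Spost := by
    rw [hAT, hA, hSanc]
    have expand : S1⁻¹ * (S1 + S1 * S2⁻¹ * S1) * S1⁻¹ = S1⁻¹ + S2⁻¹ := by
      rw [Matrix.mul_add, Matrix.add_mul, Matrix.nonsing_inv_mul _ uS1,
        Matrix.mul_assoc S1 S2⁻¹ S1, Matrix.nonsing_inv_mul_cancel_left _ _ uS1,
        Matrix.one_mul, Matrix.mul_assoc, Matrix.mul_nonsing_inv _ uS1, Matrix.mul_one]
    have hassoc : Spost * S1⁻¹ * (S1 + S1 * S2⁻¹ * S1) * (S1⁻¹ * Spost)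
        = Spost * (S1⁻¹ * (S1 + S1 * S2⁻¹ * S1) * S1⁻¹) * Spost := by
      simp only [Matrix.mul_assoc]
    rw [hassoc, expand, ← hSpostInv, Matrix.mul_nonsing_inv _ uSpost, Matrix.one_mul]
  have hmean : A *ᵥ μ₁ + b = μpost := by rw [hμpost]; exact add_comm _ _
  show Measure.map (fun y : EuclideanSpace ℝ (Fin d) =>
      (WithLp.toLp 2 (A *ᵥ y + b) : EuclideanSpace ℝ (Fin d))) (gaussianMeasure μ₁ Sanc)
    = gaussianMeasure μpost Spost
  unfold gaussianMeasure
  rw [map_affine_withDensity A uA b _ (measurable_gaussianPdf_ofReal μ₁ Sanc)]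
  congr 1
  funext x
  rw [← ENNReal.ofReal_mul (by positivity : (0:ℝ) ≤ |A.det|⁻¹)]
  exact congrArg ENNReal.ofReal
    (gaussianPdf_affine A Sanc Spost μ₁ μpost b uA hK hSancPD.det_pos hmean x)
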